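/- Let $\sigma : \mathbb{R}^d \to \mathbb{R}^d$ be Lipschitz with constant $L_\sigma$ and $\sigma(0)=0$. Suppose $K : [0,1] \to \mathbb{R}^{d\times d}$, $b : [0,1] \to \mathbb{R}^d$ are continuous, and for each $n$, $K^{(n)} : \{0,\dots,n-1\} \to \mathbb{R}^{d\times d}$ and $b^{(n)} : \{0,\dots,n-1\} \to \mathbb{R}^d$ are uniformly bounded and satisfy $\sum_{i=1}^n\left(\int_{(i-1)/n}^{i/n}\|K(t) - K_{i-1}^{(n)}\|dt\right)^2 = o(1/n)$ and the analogous condition for $b^{(n)}$, $b$. Let $X$ solve $\dot X = \sigma(KX+b)$, $X(0)=x$, and let $X_0^{(n)} = x$, $X_{i+1}^{(n)} = X_i^{(n)} + \frac1n\sigma(K_i^{(n)}X_i^{(n)} + b_i^{(n)})$. Then $\sup_{0\leq i\leq n-1}\sup_{t\in[i/n,(i+1)/n]}\|X(t) - X_i^{(n)}\| \to 0$ as $n \to \infty$. -/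

import Mathlib

open Set Filter Asymptotics Finset

lemma resnet_aux_gronwall (q : ℝ) (hq : 0 ≤ q) (e δ : ℕ → ℝ) (h0 : e 0 = 0)
    (hδ : ∀ j, 0 ≤ δ j) (n : ℕ) (hrec : ∀ i < n, e (i + 1) ≤ (1 + q) * e i + δ i) :
    ∀ i ≤ n, e i ≤ Real.exp (q * i) * ∑ j ∈ Finset.range i, δ j := by
  intro i
  induction i with
  | zero => intro _; simp [h0]
  | succ i ih =>
    intro hin
    have hi : i < n := hin
    have ihe := ih (Nat.le_of_succ_le hin)
    have hrec' := hrec i hi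
    have hP : 0 ≤ ∑ j ∈ Finset.range i, δ j := Finset.sum_nonneg fun j _ => hδ j
    have h1q : (1 + q) ≤ Real.exp q := by
      linarith [Real.add_one_le_exp q]
    have hexp1 : (1:ℝ) ≤ Real.exp (q * (i + 1)) := by
      apply Real.one_le_exp
      positivity
    calc e (i + 1) ≤ (1 + q) * e i + δ i := hrec'
      _ ≤ (1 + q) * (Real.exp (q * i) * ∑ j ∈ Finset.range i, δ j) + δ i := by
          have := mul_le_mul_of_nonneg_left ihe (by linarith : (0:ℝ) ≤ 1 + q)
          linarith
      _ ≤ Real.exp q * (Real.exp (q * i) * ∑ j ∈ Finset.range i, δ j) + δ i := by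
          have : 0 ≤ Real.exp (q * i) * ∑ j ∈ Finset.range i, δ j := by positivity
          nlinarith [this, h1q]
      _ = Real.exp (q * (i + 1)) * ∑ j ∈ Finset.range i, δ j + δ i := by
          rw [show q * ((i:ℝ) + 1) = q + q * i by ring, Real.exp_add]; ring
      _ ≤ Real.exp (q * (i + 1)) * ∑ j ∈ Finset.range i, δ j
            + Real.exp (q * (i + 1)) * δ i := by nlinarith [hδ i]
      _ = Real.exp (q * (↑(i + 1))) * ∑ j ∈ Finset.range (i + 1), δ j := by
          rw [Finset.sum_range_succ]; push_cast; ring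

lemma resnet_aux_sum_tendsto (a : ℕ → ℕ → ℝ)
    (hnn : ∀ n, ∀ i ∈ Finset.range n, 0 ≤ a n i)
    (h : (fun n : ℕ => ∑ i ∈ Finset.range n, (a n i) ^ 2) =o[atTop] fun n : ℕ => 1 / (n : ℝ)) :
    Tendsto (fun n : ℕ => ∑ i ∈ Finset.range n, a n i) atTop (nhds 0) := by
  have hA : Tendsto (fun n : ℕ => (∑ i ∈ Finset.range n, (a n i) ^ 2) * n) atTop (nhds 0) := by
    have h1 := h.mul_isBigO (isBigO_refl (fun n : ℕ => (n : ℝ)) atTop)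
    have h2 : (fun n : ℕ => 1 / (n : ℝ) * n) =ᶠ[atTop] (fun _ => (1 : ℝ)) := by
      filter_upwards [eventually_ge_atTop 1] with n hn
      have hn0 : (n : ℝ) ≠ 0 := by
        have : (1:ℝ) ≤ n := by exact_mod_cast hn
        linarith
      field_simp
    exact (isLittleO_one_iff ℝ).mp (h1.trans_eventuallyEq h2)
  have hsq : ∀ n : ℕ, (∑ i ∈ Finset.range n, a n i)
      ≤ Real.sqrt ((∑ i ∈ Finset.range n, (a n i) ^ 2) * n) := by
    intro n
    have hcs : (∑ i ∈ Finset.range n, a n i) ^ 2 ≤ (∑ i ∈ Finset.range n, (a n i) ^ 2) * n := by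
      have := sq_sum_le_card_mul_sum_sq (s := Finset.range n) (f := a n)
      simpa [Finset.card_range, mul_comm] using this
    have hs0 : 0 ≤ ∑ i ∈ Finset.range n, a n i := Finset.sum_nonneg (hnn n)
    have hr0 : 0 ≤ (∑ i ∈ Finset.range n, (a n i) ^ 2) * n := le_trans (by positivity) hcs
    exact (Real.le_sqrt hs0 hr0).mpr hcs
  have hs0 : ∀ n : ℕ, 0 ≤ ∑ i ∈ Finset.range n, a n i := fun n => Finset.sum_nonneg (hnn n)
  have hsqrt : Tendsto (fun n : ℕ =>
      Real.sqrt ((∑ i ∈ Finset.range n, (a n i) ^ 2) * n)) atTop (nhds 0) := by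
    have := (Real.continuous_sqrt.tendsto 0).comp hA
    simpa [Function.comp_def] using this
  exact squeeze_zero hs0 hsq hsqrt

set_option maxHeartbeats 2000000 in
/-- Uniform convergence of the ResNet forward pass to the ODE solution under
`L²`-type convergence of the discrete parameters. -/
theorem resnet_forward_pass_uniform_convergence
    (d : ℕ) (Lσ : ℝ) (hLσ : 0 ≤ Lσ)
    (σ : EuclideanSpace ℝ (Fin d) → EuclideanSpace ℝ (Fin d))
    (hσ : ∀ y z, ‖σ y - σ z‖ ≤ Lσ * ‖y - z‖) (hσ0 : σ 0 = 0)
    (K : ℝ → EuclideanSpace ℝ (Fin d) →L[ℝ] EuclideanSpace ℝ (Fin d))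
    (b : ℝ → EuclideanSpace ℝ (Fin d))
    (hKcont : ContinuousOn K (Icc 0 1)) (hbcont : ContinuousOn b (Icc 0 1))
    (Kn : ℕ → ℕ → EuclideanSpace ℝ (Fin d) →L[ℝ] EuclideanSpace ℝ (Fin d))
    (bn : ℕ → ℕ → EuclideanSpace ℝ (Fin d))
    (M : ℝ) (hbdd : ∀ n : ℕ, ∀ i < n, ‖Kn n i‖ ≤ M ∧ ‖bn n i‖ ≤ M)
    (hKconv : (fun n : ℕ => ∑ i ∈ Finset.range n,
        (∫ t in ((i : ℝ) / n)..(((i : ℝ) + 1) / n), ‖K t - Kn n i‖) ^ 2)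
      =o[atTop] fun n : ℕ => 1 / (n : ℝ))
    (hbconv : (fun n : ℕ => ∑ i ∈ Finset.range n,
        (∫ t in ((i : ℝ) / n)..(((i : ℝ) + 1) / n), ‖b t - bn n i‖) ^ 2)
      =o[atTop] fun n : ℕ => 1 / (n : ℝ))
    (x : EuclideanSpace ℝ (Fin d)) (X : ℝ → EuclideanSpace ℝ (Fin d))
    (hX0 : X 0 = x)
    (hX : ∀ t ∈ Icc (0:ℝ) 1, HasDerivAt X (σ (K t (X t) + b t)) t)
    (Xn : ℕ → ℕ → EuclideanSpace ℝ (Fin d))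
    (hXn0 : ∀ n, Xn n 0 = x)
    (hXnrec : ∀ n : ℕ, ∀ i < n,
      Xn n (i + 1) = Xn n i + ((n : ℝ)⁻¹) • σ (Kn n i (Xn n i) + bn n i)) :
    ∀ ε > 0, ∃ N : ℕ, ∀ n ≥ N, ∀ i < n, ∀ t ∈ Icc ((i : ℝ) / n) (((i : ℝ) + 1) / n),
      ‖X t - Xn n i‖ < ε := by
  intro ε hε
  -- basic constants and continuity facts
  have hM0 : 0 ≤ M := le_trans (norm_nonneg _) (hbdd 1 0 Nat.one_pos).1
  have hσnorm : ∀ y, ‖σ y‖ ≤ Lσ * ‖y‖ := fun y => by simpa [hσ0] using hσ y 0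
  have hσcont : Continuous σ := by
    have hlip : LipschitzWith (Real.toNNReal Lσ) σ := by
      apply LipschitzWith.of_dist_le_mul
      intro y z
      rw [dist_eq_norm, dist_eq_norm]
      calc ‖σ y - σ z‖ ≤ Lσ * ‖y - z‖ := hσ y z
        _ = (Real.toNNReal Lσ : ℝ) * ‖y - z‖ := by rw [Real.coe_toNNReal _ hLσ]
    exact hlip.continuous
  have hXcont : ContinuousOn X (Icc 0 1) :=
    fun t ht => ((hX t ht).continuousAt).continuousWithinAt
  obtain ⟨R, hR⟩ := isCompact_Icc.exists_bound_of_continuousOn hXcont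
  have hR0 : 0 ≤ R := le_trans (norm_nonneg _) (hR 0 (by norm_num))
  obtain ⟨MK, hMK⟩ := isCompact_Icc.exists_bound_of_continuousOn hKcont
  have hMK0 : 0 ≤ MK := le_trans (norm_nonneg _) (hMK 0 (by norm_num))
  obtain ⟨Mb, hMb⟩ := isCompact_Icc.exists_bound_of_continuousOn hbcont
  have hMb0 : 0 ≤ Mb := le_trans (norm_nonneg _) (hMb 0 (by norm_num))
  set C := Lσ * (MK * R + Mb) with hCdef
  have hC0 : 0 ≤ C := mul_nonneg hLσ (add_nonneg (mul_nonneg hMK0 hR0) hMb0)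
  set g : ℝ → EuclideanSpace ℝ (Fin d) := fun t => σ (K t (X t) + b t) with hgdef
  have hgcont : ContinuousOn g (Icc 0 1) :=
    hσcont.comp_continuousOn ((hKcont.clm_apply hXcont).add hbcont)
  have hgbd : ∀ t ∈ Icc (0:ℝ) 1, ‖g t‖ ≤ C := by
    intro t ht
    calc ‖g t‖ ≤ Lσ * ‖K t (X t) + b t‖ := hσnorm _
      _ ≤ Lσ * (MK * R + Mb) := by
          apply mul_le_mul_of_nonneg_left _ hLσ
          calc ‖K t (X t) + b t‖ ≤ ‖K t (X t)‖ + ‖b t‖ := norm_add_le _ _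
            _ ≤ MK * R + Mb := add_le_add
                (le_trans ((K t).le_opNorm _)
                  (mul_le_mul (hMK t ht) (hR t ht) (norm_nonneg _) hMK0))
                (hMb t ht)
  have hXlip : ∀ s ∈ Icc (0:ℝ) 1, ∀ t ∈ Icc (0:ℝ) 1, ‖X t - X s‖ ≤ C * ‖t - s‖ :=
    fun s hs t ht => Convex.norm_image_sub_le_of_norm_hasDerivWithin_le
      (fun u hu => (hX u hu).hasDerivWithinAt) hgbd (convex_Icc 0 1) hs ht
  -- uniform bound on the discrete iterates
  have hBmain : ∀ n : ℕ, ∀ i ≤ n,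
      ‖Xn n i‖ + 1 ≤ (‖x‖ + 1) * Real.exp (Lσ * M * i / n) := by
    intro n i
    induction i with
    | zero => intro _; simp [hXn0 n]
    | succ i ih =>
      intro hin
      have hi : i < n := hin
      have hnpos : 0 < n := lt_of_le_of_lt (Nat.zero_le i) hi
      have hn0 : (0:ℝ) < n := by exact_mod_cast hnpos
      have ihe := ih (le_of_lt hi)
      have hKb := hbdd n i hi
      have hstep : ‖σ (Kn n i (Xn n i) + bn n i)‖ ≤ Lσ * M * (‖Xn n i‖ + 1) := by
        calc ‖σ (Kn n i (Xn n i) + bn n i)‖ ≤ Lσ * ‖Kn n i (Xn n i) + bn n i‖ := hσnorm _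
          _ ≤ Lσ * (M * ‖Xn n i‖ + M) := by
              apply mul_le_mul_of_nonneg_left _ hLσ
              calc ‖Kn n i (Xn n i) + bn n i‖ ≤ ‖Kn n i (Xn n i)‖ + ‖bn n i‖ := norm_add_le _ _
                _ ≤ M * ‖Xn n i‖ + M := add_le_add
                    (le_trans ((Kn n i).le_opNorm _)
                      (mul_le_mul_of_nonneg_right hKb.1 (norm_nonneg _)))
                    hKb.2
          _ = Lσ * M * (‖Xn n i‖ + 1) := by ring
      have hXn1 : ‖Xn n (i + 1)‖ ≤ ‖Xn n i‖ + (n:ℝ)⁻¹ * (Lσ * M * (‖Xn n i‖ + 1)) := by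
        rw [hXnrec n i hi]
        calc ‖Xn n i + (n:ℝ)⁻¹ • σ (Kn n i (Xn n i) + bn n i)‖
            ≤ ‖Xn n i‖ + ‖(n:ℝ)⁻¹ • σ (Kn n i (Xn n i) + bn n i)‖ := norm_add_le _ _
          _ ≤ ‖Xn n i‖ + (n:ℝ)⁻¹ * (Lσ * M * (‖Xn n i‖ + 1)) := by
              rw [norm_smul, Real.norm_eq_abs, abs_of_nonneg (by positivity : (0:ℝ) ≤ (n:ℝ)⁻¹)]
              exact add_le_add le_rfl (mul_le_mul_of_nonneg_left hstep (by positivity))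
      have hkey : ‖Xn n (i + 1)‖ + 1 ≤ (1 + Lσ * M / n) * (‖Xn n i‖ + 1) := by
        have h2 : (1 + Lσ * M / n) * (‖Xn n i‖ + 1)
            = ‖Xn n i‖ + 1 + (n:ℝ)⁻¹ * (Lσ * M * (‖Xn n i‖ + 1)) := by
          field_simp
        linarith
      have hexpstep : (1 + Lσ * M / n) ≤ Real.exp (Lσ * M / n) := by
        linarith [Real.add_one_le_exp (Lσ * M / n)]
      calc ‖Xn n (i + 1)‖ + 1 ≤ (1 + Lσ * M / n) * (‖Xn n i‖ + 1) := hkey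
        _ ≤ (1 + Lσ * M / n) * ((‖x‖ + 1) * Real.exp (Lσ * M * i / n)) :=
            mul_le_mul_of_nonneg_left ihe (by positivity)
        _ ≤ Real.exp (Lσ * M / n) * ((‖x‖ + 1) * Real.exp (Lσ * M * i / n)) :=
            mul_le_mul_of_nonneg_right hexpstep (by positivity)
        _ = (‖x‖ + 1) * Real.exp (Lσ * M * ↑(i + 1) / n) := by
            push_cast
            rw [show Lσ * M * ((i:ℝ) + 1) / n = Lσ * M / n + Lσ * M * i / n by field_simp; ring,
              Real.exp_add]
            ring
  set B := (‖x‖ + 1) * Real.exp (Lσ * M) with hBdef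
  have hXnB : ∀ n : ℕ, ∀ i ≤ n, ‖Xn n i‖ ≤ B := by
    intro n i hin
    have h1 := hBmain n i hin
    have h2 : Real.exp (Lσ * M * i / n) ≤ Real.exp (Lσ * M) := by
      apply Real.exp_le_exp.mpr
      rcases Nat.eq_zero_or_pos n with h | h
      · have hi0 : i = 0 := Nat.le_zero.mp (h ▸ hin)
        subst hi0
        subst h
        simp
        positivity
      · have hn0 : (0:ℝ) < n := by exact_mod_cast h
        rw [div_le_iff₀ hn0]
        have : (i:ℝ) ≤ n := by exact_mod_cast hin
        nlinarith [mul_nonneg hLσ hM0]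
    have h3 : (‖x‖ + 1) * Real.exp (Lσ * M * i / n) ≤ B :=
      mul_le_mul_of_nonneg_left h2 (by positivity)
    linarith
  -- convergence of the parameter sums
  have haKnn : ∀ n : ℕ, ∀ i ∈ Finset.range n,
      0 ≤ ∫ t in ((i : ℝ) / n)..(((i : ℝ) + 1) / n), ‖K t - Kn n i‖ := by
    intro n i hi
    have hnpos : 0 < n := lt_of_le_of_lt (Nat.zero_le i) (Finset.mem_range.mp hi)
    have hn0 : (0:ℝ) < n := by exact_mod_cast hnpos
    apply intervalIntegral.integral_nonneg
    · rw [div_le_div_iff_of_pos_right hn0]; nlinarith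
    · intro u _; exact norm_nonneg _
  have habnn : ∀ n : ℕ, ∀ i ∈ Finset.range n,
      0 ≤ ∫ t in ((i : ℝ) / n)..(((i : ℝ) + 1) / n), ‖b t - bn n i‖ := by
    intro n i hi
    have hnpos : 0 < n := lt_of_le_of_lt (Nat.zero_le i) (Finset.mem_range.mp hi)
    have hn0 : (0:ℝ) < n := by exact_mod_cast hnpos
    apply intervalIntegral.integral_nonneg
    · rw [div_le_div_iff_of_pos_right hn0]; nlinarith
    · intro u _; exact norm_nonneg _
  have hSK := resnet_aux_sum_tendsto _ haKnn hKconv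
  have hSb := resnet_aux_sum_tendsto _ habnn hbconv
  -- the key quantitative estimate for each n ≥ 1
  have key : ∀ n : ℕ, 1 ≤ n → ∀ i < n, ∀ t ∈ Icc ((i:ℝ)/n) (((i:ℝ)+1)/n),
      ‖X t - Xn n i‖ ≤ C / n + Real.exp (Lσ * M) *
        ((Lσ * R) * (∑ j ∈ Finset.range n,
            ∫ u in ((j:ℝ)/n)..(((j:ℝ)+1)/n), ‖K u - Kn n j‖)
          + Lσ * (∑ j ∈ Finset.range n,
            ∫ u in ((j:ℝ)/n)..(((j:ℝ)+1)/n), ‖b u - bn n j‖)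
          + Lσ * M * C / n) := by
    intro n hn i hi t ht
    have hn0 : (0:ℝ) < n := by exact_mod_cast hn
    have hn0' : (n:ℝ) ≠ 0 := ne_of_gt hn0
    have hαβ : ∀ j : ℕ, ((j:ℝ)/n) ≤ (((j:ℝ)+1)/n) := fun j => by
      rw [div_le_div_iff_of_pos_right hn0]; nlinarith [Nat.cast_nonneg (α := ℝ) j]
    have hβα : ∀ j : ℕ, (((j:ℝ)+1)/n) - ((j:ℝ)/n) = (n:ℝ)⁻¹ := fun j => by
      rw [div_sub_div_same]; simp
    have hδnn : ∀ j : ℕ, 0 ≤ (Lσ * R) * (∫ u in ((j:ℝ)/n)..(((j:ℝ)+1)/n), ‖K u - Kn n j‖)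
        + Lσ * (∫ u in ((j:ℝ)/n)..(((j:ℝ)+1)/n), ‖b u - bn n j‖) + Lσ * M * C / n ^ 2 := by
      intro j
      have h1 : 0 ≤ ∫ u in ((j:ℝ)/n)..(((j:ℝ)+1)/n), ‖K u - Kn n j‖ :=
        intervalIntegral.integral_nonneg (hαβ j) (fun u _ => norm_nonneg _)
      have h2 : 0 ≤ ∫ u in ((j:ℝ)/n)..(((j:ℝ)+1)/n), ‖b u - bn n j‖ :=
        intervalIntegral.integral_nonneg (hαβ j) (fun u _ => norm_nonneg _)
      have h3 : 0 ≤ Lσ * M * C / n ^ 2 := by positivity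
      have h4 : 0 ≤ Lσ * R := mul_nonneg hLσ hR0
      nlinarith
    have he0 : ‖X ((0:ℝ)/n) - Xn n 0‖ = 0 := by
      simp [hX0, hXn0 n]
    -- one-step recursion
    have hrec : ∀ j, j < n → ‖X (((j:ℝ)+1)/n) - Xn n (j+1)‖
        ≤ (1 + Lσ * M / n) * ‖X ((j:ℝ)/n) - Xn n j‖
          + ((Lσ * R) * (∫ u in ((j:ℝ)/n)..(((j:ℝ)+1)/n), ‖K u - Kn n j‖)
            + Lσ * (∫ u in ((j:ℝ)/n)..(((j:ℝ)+1)/n), ‖b u - bn n j‖)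
            + Lσ * M * C / n ^ 2) := by
      intro j hj
      have hab : ((j:ℝ)/n) ≤ (((j:ℝ)+1)/n) := hαβ j
      have hβ1 : (((j:ℝ)+1)/n) ≤ 1 := by
        rw [div_le_one hn0]
        exact_mod_cast Nat.succ_le_of_lt hj
      have hα0 : (0:ℝ) ≤ ((j:ℝ)/n) := by positivity
      have hsub : Icc ((j:ℝ)/n) (((j:ℝ)+1)/n) ⊆ Icc (0:ℝ) 1 := Icc_subset_Icc hα0 hβ1
      have huIcc : uIcc ((j:ℝ)/n) (((j:ℝ)+1)/n) = Icc ((j:ℝ)/n) (((j:ℝ)+1)/n) :=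
        uIcc_of_le hab
      have hgc' : ContinuousOn g (uIcc ((j:ℝ)/n) (((j:ℝ)+1)/n)) := by
        rw [huIcc]; exact hgcont.mono hsub
      have hgint : IntervalIntegrable g MeasureTheory.volume ((j:ℝ)/n) (((j:ℝ)+1)/n) :=
        hgc'.intervalIntegrable
      have hXint : X (((j:ℝ)+1)/n) - X ((j:ℝ)/n) = ∫ u in ((j:ℝ)/n)..(((j:ℝ)+1)/n), g u :=
        (intervalIntegral.integral_eq_sub_of_hasDerivAt
          (fun u hu => hX u (hsub (huIcc ▸ hu))) hgint).symm
      have hconst : (∫ _ in ((j:ℝ)/n)..(((j:ℝ)+1)/n), σ (Kn n j (Xn n j) + bn n j))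
          = ((n:ℝ)⁻¹) • σ (Kn n j (Xn n j) + bn n j) := by
        rw [intervalIntegral.integral_const, hβα j]
      have hsplit : X (((j:ℝ)+1)/n) - Xn n (j+1)
          = (X ((j:ℝ)/n) - Xn n j)
            + ∫ u in ((j:ℝ)/n)..(((j:ℝ)+1)/n), (g u - σ (Kn n j (Xn n j) + bn n j)) := by
        rw [intervalIntegral.integral_sub hgint intervalIntegrable_const, ← hXint, hconst,
          hXnrec n j hj]
        abel
      -- pointwise bound on the integrand
      have hpt : ∀ u ∈ Icc ((j:ℝ)/n) (((j:ℝ)+1)/n),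
          ‖g u - σ (Kn n j (Xn n j) + bn n j)‖ ≤
            (Lσ * R) * ‖K u - Kn n j‖ + Lσ * ‖b u - bn n j‖
              + Lσ * M * (C / n + ‖X ((j:ℝ)/n) - Xn n j‖) := by
        intro u hu
        have hu1 : u ∈ Icc (0:ℝ) 1 := hsub hu
        have hα1 : ((j:ℝ)/n) ∈ Icc (0:ℝ) 1 := hsub (left_mem_Icc.mpr hab)
        have hvec : (K u (X u) + b u) - (Kn n j (Xn n j) + bn n j)
            = (K u - Kn n j) (X u) + (Kn n j) (X u - X ((j:ℝ)/n))
              + (Kn n j) (X ((j:ℝ)/n) - Xn n j) + (b u - bn n j) := by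
          simp only [ContinuousLinearMap.sub_apply, map_sub]
          abel
        have n1 : ‖(K u - Kn n j) (X u)‖ ≤ ‖K u - Kn n j‖ * R :=
          le_trans ((K u - Kn n j).le_opNorm _)
            (mul_le_mul_of_nonneg_left (hR u hu1) (norm_nonneg _))
        have hXuα : ‖X u - X ((j:ℝ)/n)‖ ≤ C * (n:ℝ)⁻¹ := by
          have hl := hXlip ((j:ℝ)/n) hα1 u hu1
          have habs : ‖u - (j:ℝ)/n‖ ≤ (n:ℝ)⁻¹ := by
            rw [Real.norm_eq_abs, abs_of_nonneg (by linarith [hu.1] : (0:ℝ) ≤ u - (j:ℝ)/n)]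
            have := hβα j
            linarith [hu.2]
          calc ‖X u - X ((j:ℝ)/n)‖ ≤ C * ‖u - (j:ℝ)/n‖ := hl
            _ ≤ C * (n:ℝ)⁻¹ := mul_le_mul_of_nonneg_left habs hC0
        have n2 : ‖(Kn n j) (X u - X ((j:ℝ)/n))‖ ≤ M * (C * (n:ℝ)⁻¹) :=
          le_trans ((Kn n j).le_opNorm _)
            (mul_le_mul (hbdd n j hj).1 hXuα (norm_nonneg _) hM0)
        have n3 : ‖(Kn n j) (X ((j:ℝ)/n) - Xn n j)‖ ≤ M * ‖X ((j:ℝ)/n) - Xn n j‖ :=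
          le_trans ((Kn n j).le_opNorm _)
            (mul_le_mul_of_nonneg_right (hbdd n j hj).1 (norm_nonneg _))
        have htot : ‖g u - σ (Kn n j (Xn n j) + bn n j)‖
            ≤ Lσ * (‖K u - Kn n j‖ * R + M * (C * (n:ℝ)⁻¹) + M * ‖X ((j:ℝ)/n) - Xn n j‖
              + ‖b u - bn n j‖) := by
          calc ‖g u - σ (Kn n j (Xn n j) + bn n j)‖
              ≤ Lσ * ‖(K u (X u) + b u) - (Kn n j (Xn n j) + bn n j)‖ := hσ _ _
            _ ≤ _ := by
                apply mul_le_mul_of_nonneg_left _ hLσ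
                rw [hvec]
                refine le_trans (norm_add_le _ _) ?_
                refine add_le_add ?_ le_rfl
                refine le_trans (norm_add_le _ _) ?_
                exact add_le_add (le_trans (norm_add_le _ _) (add_le_add n1 n2)) n3
        calc ‖g u - σ (Kn n j (Xn n j) + bn n j)‖
            ≤ Lσ * (‖K u - Kn n j‖ * R + M * (C * (n:ℝ)⁻¹) + M * ‖X ((j:ℝ)/n) - Xn n j‖
              + ‖b u - bn n j‖) := htot
          _ = (Lσ * R) * ‖K u - Kn n j‖ + Lσ * ‖b u - bn n j‖
              + Lσ * M * (C / n + ‖X ((j:ℝ)/n) - Xn n j‖) := by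
              ring
      -- integrate the pointwise bound
      have hKc' : ContinuousOn (fun u => ‖K u - Kn n j‖) (uIcc ((j:ℝ)/n) (((j:ℝ)+1)/n)) := by
        rw [huIcc]; exact ((hKcont.mono hsub).sub continuousOn_const).norm
      have hbc' : ContinuousOn (fun u => ‖b u - bn n j‖) (uIcc ((j:ℝ)/n) (((j:ℝ)+1)/n)) := by
        rw [huIcc]; exact ((hbcont.mono hsub).sub continuousOn_const).norm
      have hiK : IntervalIntegrable (fun u => (Lσ * R) * ‖K u - Kn n j‖)
          MeasureTheory.volume ((j:ℝ)/n) (((j:ℝ)+1)/n) :=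
        hKc'.intervalIntegrable.const_mul _
      have hib : IntervalIntegrable (fun u => Lσ * ‖b u - bn n j‖)
          MeasureTheory.volume ((j:ℝ)/n) (((j:ℝ)+1)/n) :=
        hbc'.intervalIntegrable.const_mul _
      have hghc : ContinuousOn (fun u => ‖g u - σ (Kn n j (Xn n j) + bn n j)‖)
          (uIcc ((j:ℝ)/n) (((j:ℝ)+1)/n)) :=
        (hgc'.sub continuousOn_const).norm
      have hmono : (∫ u in ((j:ℝ)/n)..(((j:ℝ)+1)/n), ‖g u - σ (Kn n j (Xn n j) + bn n j)‖)
          ≤ ∫ u in ((j:ℝ)/n)..(((j:ℝ)+1)/n),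
              ((Lσ * R) * ‖K u - Kn n j‖ + Lσ * ‖b u - bn n j‖
                + Lσ * M * (C / n + ‖X ((j:ℝ)/n) - Xn n j‖)) := by
        apply intervalIntegral.integral_mono_on hab hghc.intervalIntegrable _ hpt
        exact (hiK.add hib).add intervalIntegrable_const
      have hval : (∫ u in ((j:ℝ)/n)..(((j:ℝ)+1)/n),
            ((Lσ * R) * ‖K u - Kn n j‖ + Lσ * ‖b u - bn n j‖
              + Lσ * M * (C / n + ‖X ((j:ℝ)/n) - Xn n j‖)))
          = (Lσ * R) * (∫ u in ((j:ℝ)/n)..(((j:ℝ)+1)/n), ‖K u - Kn n j‖)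
            + Lσ * (∫ u in ((j:ℝ)/n)..(((j:ℝ)+1)/n), ‖b u - bn n j‖)
            + Lσ * M * (C / n + ‖X ((j:ℝ)/n) - Xn n j‖) * (n:ℝ)⁻¹ := by
        rw [intervalIntegral.integral_add (hiK.add hib) intervalIntegrable_const,
          intervalIntegral.integral_add hiK hib,
          intervalIntegral.integral_const_mul, intervalIntegral.integral_const_mul,
          intervalIntegral.integral_const, hβα j, smul_eq_mul]
        ring
      have hnorm_int : ‖∫ u in ((j:ℝ)/n)..(((j:ℝ)+1)/n), (g u - σ (Kn n j (Xn n j) + bn n j))‖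
          ≤ ∫ u in ((j:ℝ)/n)..(((j:ℝ)+1)/n), ‖g u - σ (Kn n j (Xn n j) + bn n j)‖ :=
        intervalIntegral.norm_integral_le_integral_norm hab
      calc ‖X (((j:ℝ)+1)/n) - Xn n (j+1)‖
          = ‖(X ((j:ℝ)/n) - Xn n j)
              + ∫ u in ((j:ℝ)/n)..(((j:ℝ)+1)/n), (g u - σ (Kn n j (Xn n j) + bn n j))‖ := by
            rw [hsplit]
        _ ≤ ‖X ((j:ℝ)/n) - Xn n j‖
              + ‖∫ u in ((j:ℝ)/n)..(((j:ℝ)+1)/n), (g u - σ (Kn n j (Xn n j) + bn n j))‖ :=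
            norm_add_le _ _
        _ ≤ ‖X ((j:ℝ)/n) - Xn n j‖
              + ((Lσ * R) * (∫ u in ((j:ℝ)/n)..(((j:ℝ)+1)/n), ‖K u - Kn n j‖)
                + Lσ * (∫ u in ((j:ℝ)/n)..(((j:ℝ)+1)/n), ‖b u - bn n j‖)
                + Lσ * M * (C / n + ‖X ((j:ℝ)/n) - Xn n j‖) * (n:ℝ)⁻¹) := by
            rw [← hval]
            exact add_le_add le_rfl (le_trans hnorm_int hmono)
        _ = (1 + Lσ * M / n) * ‖X ((j:ℝ)/n) - Xn n j‖
              + ((Lσ * R) * (∫ u in ((j:ℝ)/n)..(((j:ℝ)+1)/n), ‖K u - Kn n j‖)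
                + Lσ * (∫ u in ((j:ℝ)/n)..(((j:ℝ)+1)/n), ‖b u - bn n j‖)
                + Lσ * M * C / n ^ 2) := by
            ring
    -- discrete Gronwall
    have hgr := resnet_aux_gronwall (Lσ * M / n) (by positivity)
      (fun j => ‖X ((j:ℝ)/n) - Xn n j‖)
      (fun j => (Lσ * R) * (∫ u in ((j:ℝ)/n)..(((j:ℝ)+1)/n), ‖K u - Kn n j‖)
        + Lσ * (∫ u in ((j:ℝ)/n)..(((j:ℝ)+1)/n), ‖b u - bn n j‖) + Lσ * M * C / n ^ 2)
      (by simpa using he0) hδnn n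
      (fun j hj => by push_cast; exact hrec j hj)
      i (le_of_lt hi)
    have hδsum_le : (∑ j ∈ Finset.range i,
          ((Lσ * R) * (∫ u in ((j:ℝ)/n)..(((j:ℝ)+1)/n), ‖K u - Kn n j‖)
            + Lσ * (∫ u in ((j:ℝ)/n)..(((j:ℝ)+1)/n), ‖b u - bn n j‖) + Lσ * M * C / n ^ 2))
        ≤ ∑ j ∈ Finset.range n,
          ((Lσ * R) * (∫ u in ((j:ℝ)/n)..(((j:ℝ)+1)/n), ‖K u - Kn n j‖)
            + Lσ * (∫ u in ((j:ℝ)/n)..(((j:ℝ)+1)/n), ‖b u - bn n j‖) + Lσ * M * C / n ^ 2) :=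
      Finset.sum_le_sum_of_subset_of_nonneg (Finset.range_subset_range.mpr hi.le)
        (fun j _ _ => hδnn j)
    have hexp_le : Real.exp (Lσ * M / n * i) ≤ Real.exp (Lσ * M) := by
      apply Real.exp_le_exp.mpr
      rw [div_mul_eq_mul_div, div_le_iff₀ hn0]
      have hi' : (i:ℝ) ≤ (n:ℝ) := by exact_mod_cast hi.le
      nlinarith [mul_nonneg hLσ hM0, Nat.cast_nonneg (α := ℝ) i]
    have hei : ‖X ((i:ℝ)/n) - Xn n i‖ ≤ Real.exp (Lσ * M) * ∑ j ∈ Finset.range n,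
        ((Lσ * R) * (∫ u in ((j:ℝ)/n)..(((j:ℝ)+1)/n), ‖K u - Kn n j‖)
          + Lσ * (∫ u in ((j:ℝ)/n)..(((j:ℝ)+1)/n), ‖b u - bn n j‖) + Lσ * M * C / n ^ 2) := by
      refine le_trans hgr ?_
      have h0 : 0 ≤ ∑ j ∈ Finset.range i,
          ((Lσ * R) * (∫ u in ((j:ℝ)/n)..(((j:ℝ)+1)/n), ‖K u - Kn n j‖)
            + Lσ * (∫ u in ((j:ℝ)/n)..(((j:ℝ)+1)/n), ‖b u - bn n j‖) + Lσ * M * C / n ^ 2) :=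
        Finset.sum_nonneg fun j _ => hδnn j
      calc Real.exp (Lσ * M / n * i) * ∑ j ∈ Finset.range i,
            ((Lσ * R) * (∫ u in ((j:ℝ)/n)..(((j:ℝ)+1)/n), ‖K u - Kn n j‖)
              + Lσ * (∫ u in ((j:ℝ)/n)..(((j:ℝ)+1)/n), ‖b u - bn n j‖) + Lσ * M * C / n ^ 2)
          ≤ Real.exp (Lσ * M) * ∑ j ∈ Finset.range i,
            ((Lσ * R) * (∫ u in ((j:ℝ)/n)..(((j:ℝ)+1)/n), ‖K u - Kn n j‖)
              + Lσ * (∫ u in ((j:ℝ)/n)..(((j:ℝ)+1)/n), ‖b u - bn n j‖) + Lσ * M * C / n ^ 2) :=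
            mul_le_mul_of_nonneg_right hexp_le h0
        _ ≤ _ := mul_le_mul_of_nonneg_left hδsum_le (Real.exp_nonneg _)
    have hsum : (∑ j ∈ Finset.range n,
          ((Lσ * R) * (∫ u in ((j:ℝ)/n)..(((j:ℝ)+1)/n), ‖K u - Kn n j‖)
            + Lσ * (∫ u in ((j:ℝ)/n)..(((j:ℝ)+1)/n), ‖b u - bn n j‖) + Lσ * M * C / n ^ 2))
        = (Lσ * R) * (∑ j ∈ Finset.range n, ∫ u in ((j:ℝ)/n)..(((j:ℝ)+1)/n), ‖K u - Kn n j‖)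
          + Lσ * (∑ j ∈ Finset.range n, ∫ u in ((j:ℝ)/n)..(((j:ℝ)+1)/n), ‖b u - bn n j‖)
          + Lσ * M * C / n := by
      rw [Finset.sum_add_distrib, Finset.sum_add_distrib, ← Finset.mul_sum, ← Finset.mul_sum,
        Finset.sum_const, Finset.card_range, nsmul_eq_mul]
      congr 1
      field_simp
    -- conclude for arbitrary t in the subinterval
    have hβ1 : (((i:ℝ)+1)/n) ≤ 1 := by
      rw [div_le_one hn0]
      exact_mod_cast Nat.succ_le_of_lt hi
    have hα0 : (0:ℝ) ≤ ((i:ℝ)/n) := by positivity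
    have hsub : Icc ((i:ℝ)/n) (((i:ℝ)+1)/n) ⊆ Icc (0:ℝ) 1 := Icc_subset_Icc hα0 hβ1
    have ht1 : t ∈ Icc (0:ℝ) 1 := hsub ht
    have hαi1 : ((i:ℝ)/n) ∈ Icc (0:ℝ) 1 := hsub (left_mem_Icc.mpr (hαβ i))
    have hlipb : ‖X t - X ((i:ℝ)/n)‖ ≤ C * (n:ℝ)⁻¹ := by
      have hl := hXlip ((i:ℝ)/n) hαi1 t ht1
      have habs : ‖t - (i:ℝ)/n‖ ≤ (n:ℝ)⁻¹ := by
        rw [Real.norm_eq_abs, abs_of_nonneg (by linarith [ht.1] : (0:ℝ) ≤ t - (i:ℝ)/n)]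
        have := hβα i
        linarith [ht.2]
      calc ‖X t - X ((i:ℝ)/n)‖ ≤ C * ‖t - (i:ℝ)/n‖ := hl
        _ ≤ C * (n:ℝ)⁻¹ := mul_le_mul_of_nonneg_left habs hC0
    have htri : ‖X t - Xn n i‖ ≤ ‖X t - X ((i:ℝ)/n)‖ + ‖X ((i:ℝ)/n) - Xn n i‖ := by
      have := dist_triangle (X t) (X ((i:ℝ)/n)) (Xn n i)
      simpa [dist_eq_norm] using this
    calc ‖X t - Xn n i‖ ≤ ‖X t - X ((i:ℝ)/n)‖ + ‖X ((i:ℝ)/n) - Xn n i‖ := htri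
      _ ≤ C * (n:ℝ)⁻¹ + Real.exp (Lσ * M) * ∑ j ∈ Finset.range n,
            ((Lσ * R) * (∫ u in ((j:ℝ)/n)..(((j:ℝ)+1)/n), ‖K u - Kn n j‖)
              + Lσ * (∫ u in ((j:ℝ)/n)..(((j:ℝ)+1)/n), ‖b u - bn n j‖) + Lσ * M * C / n ^ 2) :=
          add_le_add hlipb hei
      _ = C / n + Real.exp (Lσ * M) *
            ((Lσ * R) * (∑ j ∈ Finset.range n,
                ∫ u in ((j:ℝ)/n)..(((j:ℝ)+1)/n), ‖K u - Kn n j‖)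
              + Lσ * (∑ j ∈ Finset.range n,
                ∫ u in ((j:ℝ)/n)..(((j:ℝ)+1)/n), ‖b u - bn n j‖)
              + Lσ * M * C / n) := by
          rw [hsum]; ring
  -- assemble the limit
  have t1 : Tendsto (fun n : ℕ => C / (n:ℝ)) atTop (nhds 0) :=
    tendsto_const_div_atTop_nhds_zero_nat C
  have t4 : Tendsto (fun n : ℕ => Lσ * M * C / (n:ℝ)) atTop (nhds 0) :=
    tendsto_const_div_atTop_nhds_zero_nat _
  have t2 := hSK.const_mul (Lσ * R)
  have t3 := hSb.const_mul Lσ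
  have hFt : Tendsto (fun n : ℕ => C / (n:ℝ) + Real.exp (Lσ * M) *
      ((Lσ * R) * (∑ j ∈ Finset.range n,
          ∫ u in ((j:ℝ)/n)..(((j:ℝ)+1)/n), ‖K u - Kn n j‖)
        + Lσ * (∑ j ∈ Finset.range n,
          ∫ u in ((j:ℝ)/n)..(((j:ℝ)+1)/n), ‖b u - bn n j‖)
        + Lσ * M * C / n)) atTop (nhds 0) := by
    have := t1.add (((t2.add t3).add t4).const_mul (Real.exp (Lσ * M)))
    simpa only [mul_zero, add_zero, zero_add] using this
  have hev := hFt.eventually (gt_mem_nhds hε)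
  obtain ⟨N, hN⟩ := eventually_atTop.mp hev
  refine ⟨max N 1, fun n hn i hi t ht => ?_⟩
  exact lt_of_le_of_lt (key n (le_trans (le_max_right N 1) hn) i hi t ht)
    (hN n (le_trans (le_max_left N 1) hn))
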